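/- Under the hypotheses of the previous statement (finite-energy radial solution with decay exponents β₁, β₂), the constraints 0 < (β₁-1)(β₂-1) < (N₁+1)(N₂+1), β₂(β₁-1) > N₂(N₁+1), and 0 < β₁(β₂-1) < N₁(N₂+1) hold. -/

import Mathlib

open MeasureTheory Real Filter Set

lemma ftcIoi {g g' : ℝ → ℝ} (hg : ∀ r ∈ Set.Ioi (0:ℝ), HasDerivAt g (g' r) r)
    (hc : ContinuousOn g' (Set.Ioi 0)) {a b : ℝ} (ha : 0 < a) (hab : a ≤ b) :
    g b - g a = ∫ t in a..b, g' t := by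
  refine (intervalIntegral.integral_eq_sub_of_hasDerivAt ?_ ?_).symm
  · intro x hx
    rw [Set.uIcc_of_le hab] at hx
    exact hg x (lt_of_lt_of_le ha hx.1)
  · apply (hc.mono ?_).intervalIntegrable
    rw [Set.uIcc_of_le hab]
    intro x hx; exact lt_of_lt_of_le ha hx.1

lemma expLower {w w' ψ : ℝ → ℝ} (hw : ∀ r ∈ Set.Ioi (0:ℝ), HasDerivAt w (w' r) r)
    (hc : ContinuousOn w' (Set.Ioi 0)) {m r₀ K : ℝ} (hr₀ : 1 ≤ r₀)
    (hψc : ContinuousOn ψ (Set.Ioi 0)) (hψK : ∀ R, r₀ ≤ R → (∫ t in r₀..R, ψ t) ≤ K)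
    (hlb : ∀ r, r₀ ≤ r → -m / r - ψ r ≤ w' r) :
    ∀ R, r₀ ≤ R → Real.exp (w r₀ - K + m * Real.log r₀) * R ^ (-m) ≤ Real.exp (w R) := by
  intro R hR
  have hr₀0 : (0:ℝ) < r₀ := lt_of_lt_of_le one_pos hr₀
  have hR0 : (0:ℝ) < R := lt_of_lt_of_le hr₀0 hR
  have hsub : Set.uIcc r₀ R ⊆ Set.Ioi 0 := by
    rw [Set.uIcc_of_le hR]
    intro x hx; exact lt_of_lt_of_le hr₀0 hx.1
  have h1 : w R - w r₀ = ∫ t in r₀..R, w' t := ftcIoi hw hc hr₀0 hR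
  have hint1 : IntervalIntegrable (fun t => -m / t) volume r₀ R := by
    apply ContinuousOn.intervalIntegrable
    exact (continuousOn_const.div continuousOn_id (fun x hx => ne_of_gt (hsub hx)))
  have hint2 : IntervalIntegrable ψ volume r₀ R := (hψc.mono hsub).intervalIntegrable
  have h2 : (∫ t in r₀..R, (-m / t - ψ t)) ≤ ∫ t in r₀..R, w' t := by
    apply intervalIntegral.integral_mono_on hR (hint1.sub hint2)
      ((hc.mono hsub).intervalIntegrable)
    intro t ht; exact hlb t ht.1
  have h3 : (∫ t in r₀..R, (-m / t - ψ t))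
      = -m * (Real.log R - Real.log r₀) - ∫ t in r₀..R, ψ t := by
    rw [intervalIntegral.integral_sub hint1 hint2]
    congr 1
    have : (fun t : ℝ => -m / t) = fun t : ℝ => -m * t⁻¹ := by
      funext t; rw [div_eq_mul_inv]
    rw [this, intervalIntegral.integral_const_mul, integral_inv]
    · rw [Real.log_div (ne_of_gt hR0) (ne_of_gt hr₀0)]
    · rw [Set.uIcc_of_le hR]; intro h; exact absurd (hsub (by rw [Set.uIcc_of_le hR]; exact h)) (by simp)
  have h4 : w r₀ - K + m * Real.log r₀ + (-m) * Real.log R ≤ w R := by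
    have := hψK R hR
    nlinarith [h1, h2, h3]
  calc Real.exp (w r₀ - K + m * Real.log r₀) * R ^ (-m)
      = Real.exp (w r₀ - K + m * Real.log r₀) * Real.exp (Real.log R * (-m)) := by
        rw [Real.rpow_def_of_pos hR0]
    _ = Real.exp (w r₀ - K + m * Real.log r₀ + (-m) * Real.log R) := by
        rw [← Real.exp_add]; ring_nf
    _ ≤ Real.exp (w R) := Real.exp_le_exp.2 h4


lemma oneLtOfExpLower {w : ℝ → ℝ} {β c r₀ : ℝ} (hc : 0 < c) (hr₀ : 1 ≤ r₀)
    (hlow : ∀ R, r₀ ≤ R → c * R ^ (-(2*β)) ≤ Real.exp (w R))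
    (hint : IntegrableOn (fun t => t * Real.exp (w t)) (Set.Ioi 0)) : 1 < β := by
  by_contra h
  push_neg at h
  have hr₀0 : (0:ℝ) < r₀ := lt_of_lt_of_le one_pos hr₀
  have hint' : IntegrableOn (fun t => t * Real.exp (w t)) (Set.Ioi r₀) :=
    hint.mono_set (Set.Ioi_subset_Ioi hr₀0.le)
  have key : IntegrableOn (fun t => t ^ (1 - 2*β)) (Set.Ioi r₀) := by
    apply Integrable.mono' (hint'.const_mul c⁻¹)
    · apply ContinuousOn.aestronglyMeasurable _ measurableSet_Ioi
      intro t ht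
      exact (Real.continuousAt_rpow_const t _
        (Or.inl (ne_of_gt (hr₀0.trans ht)))).continuousWithinAt
    · rw [ae_restrict_iff' measurableSet_Ioi]
      filter_upwards with t
      intro ht
      have ht0 : (0:ℝ) < t := hr₀0.trans ht
      have h1 : c * t ^ (-(2*β)) ≤ Real.exp (w t) := hlow t (le_of_lt ht)
      have h2 : t ^ (1 - 2*β) = t * t ^ (-(2*β)) := by
        rw [show (1 - 2*β) = 1 + (-(2*β)) by ring, Real.rpow_add ht0, Real.rpow_one]
      rw [Real.norm_eq_abs, abs_of_nonneg (Real.rpow_nonneg ht0.le _), h2]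
      rw [show c⁻¹ * (t * Real.exp (w t)) = (t * Real.exp (w t)) / c by field_simp]
      rw [le_div_iff₀ hc]
      nlinarith [Real.rpow_nonneg ht0.le (-(2*β)), mul_le_mul_of_nonneg_left h1 ht0.le]
  rw [integrableOn_Ioi_rpow_iff hr₀0] at key
  linarith

lemma limitZeroLe {w w' : ℝ → ℝ} (hw : ∀ r ∈ Set.Ioi (0:ℝ), HasDerivAt w (w' r) r)
    (hc : ContinuousOn w' (Set.Ioi 0)) {N C ε L : ℝ} (hε : 0 < ε)
    (hC : ∀ r ∈ Set.Ioo (0:ℝ) ε, |w r - N * Real.log r| ≤ C)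
    (hlim : Tendsto (fun r => r * w' r) (nhdsWithin 0 (Set.Ioi 0)) (nhds L)) : L ≤ N := by
  by_contra hLN
  push_neg at hLN
  set M := (N + L)/2 with hM
  have hM1 : N < M := by rw [hM]; linarith
  have hM2 : M < L := by rw [hM]; linarith
  have hev : ∀ᶠ r in nhdsWithin 0 (Set.Ioi 0), M < r * w' r :=
    hlim.eventually (eventually_gt_nhds hM2)
  obtain ⟨δ, hδ, hsub⟩ := mem_nhdsGT_iff_exists_Ioo_subset.mp hev
  have hδ0 : (0:ℝ) < δ := hδ
  set s := min δ ε / 2 with hs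
  have hs0 : 0 < s := by positivity
  have hsδ : s < δ := by
    have : min δ ε ≤ δ := min_le_left _ _
    rw [hs]; linarith
  have hsε : s < ε := by
    have : min δ ε ≤ ε := min_le_right _ _
    rw [hs]; linarith
  -- key estimate for r ∈ Ioo 0 s
  have key : ∀ r ∈ Set.Ioo (0:ℝ) s, w r - N * Real.log r
      ≤ (w s - M * Real.log s) + (M - N) * Real.log r := by
    intro r hr
    have hr0 : 0 < r := hr.1
    have hrs : r ≤ s := hr.2.le
    have hsub2 : Set.uIcc r s ⊆ Set.Ioi 0 := by
      rw [Set.uIcc_of_le hrs]; intro x hx; exact lt_of_lt_of_le hr0 hx.1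
    have h1 : w s - w r = ∫ t in r..s, w' t := ftcIoi hw hc hr0 hrs
    have hint1 : IntervalIntegrable (fun t => M / t) volume r s := by
      apply ContinuousOn.intervalIntegrable
      exact (continuousOn_const.div continuousOn_id (fun x hx => ne_of_gt (hsub2 hx)))
    have h2 : (∫ t in r..s, M / t) ≤ ∫ t in r..s, w' t := by
      apply intervalIntegral.integral_mono_on hrs hint1 ((hc.mono hsub2).intervalIntegrable)
      intro t ht
      have ht0 : 0 < t := lt_of_lt_of_le hr0 ht.1
      have htδ : t ∈ Set.Ioo (0:ℝ) δ := ⟨ht0, lt_of_le_of_lt ht.2 hsδ⟩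
      have := hsub htδ
      rw [div_le_iff₀ ht0]
      rw [Set.mem_setOf_eq] at this
      nlinarith
    have h3 : (∫ t in r..s, M / t) = M * (Real.log s - Real.log r) := by
      have : (fun t : ℝ => M / t) = fun t : ℝ => M * t⁻¹ := by
        funext t; rw [div_eq_mul_inv]
      rw [this, intervalIntegral.integral_const_mul, integral_inv]
      · rw [Real.log_div (ne_of_gt hs0) (ne_of_gt hr0)]
      · intro h; exact absurd (hsub2 h) (by simp)
    nlinarith [h1, h2, h3]
  -- the RHS tends to -∞
  have htends : Tendsto (fun r => (w s - M * Real.log s) + (M - N) * Real.log r)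
      (nhdsWithin 0 (Set.Ioi 0)) atBot := by
    apply tendsto_atBot_add_const_left
    exact (Real.tendsto_log_nhdsGT_zero).const_mul_atBot (by linarith)
  have hev2 : ∀ᶠ r in nhdsWithin 0 (Set.Ioi 0),
      (w s - M * Real.log s) + (M - N) * Real.log r < -C :=
    htends.eventually (eventually_lt_atBot (-C))
  have hev3 : ∀ᶠ r in nhdsWithin 0 (Set.Ioi 0), r ∈ Set.Ioo (0:ℝ) s :=
    by filter_upwards [Ioo_mem_nhdsGT_of_mem (Set.mem_Ico.mpr ⟨le_refl 0, hs0⟩)] with r hr using hr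
  obtain ⟨r, hr1, hr2⟩ := (hev2.and hev3).exists
  have hCr := hC r ⟨hr2.1, lt_trans hr2.2 hsε⟩
  have := key r hr2
  have : w r - N * Real.log r < -C := lt_of_le_of_lt this hr1
  have h2 : -C ≤ w r - N * Real.log r := neg_le_of_abs_le hCr
  linarith

lemma tendstoPrimZero {f : ℝ → ℝ} (hf : IntegrableOn f (Set.Ioi 0)) :
    Tendsto (fun a => ∫ t in Set.Ioc (0:ℝ) a, f t) (nhdsWithin 0 (Set.Ioi 0)) (nhds 0) := by
  have hicc : IntegrableOn f (Set.Icc (0:ℝ) 1) := by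
    rw [integrableOn_Icc_iff_integrableOn_Ioc]
    exact hf.mono_set Set.Ioc_subset_Ioi_self
  have hco := intervalIntegral.continuousOn_primitive (a := (0:ℝ)) (b := 1) (μ := volume) hicc
  have h0 : (0:ℝ) ∈ Set.Icc (0:ℝ) 1 := by norm_num
  have hcw := hco 0 h0
  have hval : (∫ t in Set.Ioc (0:ℝ) (0:ℝ), f t) = 0 := by
    rw [Set.Ioc_self]; simp
  unfold ContinuousWithinAt at hcw
  simp only [] at hcw
  rw [hval] at hcw
  apply hcw.mono_left
  rw [← nhdsWithin_Ioc_eq_nhdsGT (zero_lt_one (α := ℝ))]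
  exact nhdsWithin_mono 0 Set.Ioc_subset_Icc_self

lemma splitIoi {D : ℝ → ℝ} (hDi : IntegrableOn D (Set.Ioi 0)) :
    (∫ t in Set.Ioi (0:ℝ), D t)
      = (∫ t in Set.Ioc (0:ℝ) 1, D t) + ∫ t in Set.Ioi (1:ℝ), D t := by
  rw [← setIntegral_union (Set.Ioc_disjoint_Ioi le_rfl) measurableSet_Ioi
    (hDi.mono_set Set.Ioc_subset_Ioi_self) (hDi.mono_set (Set.Ioi_subset_Ioi zero_le_one)),
    Set.Ioc_union_Ioi_eq_Ioi zero_le_one]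

lemma flux {G D : ℝ → ℝ} (hG : ∀ r ∈ Set.Ioi (0:ℝ), HasDerivAt G (D r) r)
    (hDc : ContinuousOn D (Set.Ioi 0)) (hDi : IntegrableOn D (Set.Ioi 0))
    {Linf : ℝ} (htop : Tendsto G atTop (nhds Linf)) :
    Tendsto G (nhdsWithin 0 (Set.Ioi 0)) (nhds (Linf - ∫ t in Set.Ioi 0, D t)) := by
  -- identify Linf
  have h1 : Tendsto (fun R => ∫ t in (1:ℝ)..R, D t) atTop
      (nhds (∫ t in Set.Ioi (1:ℝ), D t)) :=
    intervalIntegral_tendsto_integral_Ioi 1 (hDi.mono_set (Set.Ioi_subset_Ioi zero_le_one))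
      tendsto_id
  have h2 : Tendsto G atTop (nhds (G 1 + ∫ t in Set.Ioi (1:ℝ), D t)) := by
    apply ((tendsto_const_nhds).add h1).congr'
    filter_upwards [eventually_ge_atTop (1:ℝ)] with R hR
    have := ftcIoi hG hDc one_pos hR
    linarith
  have hLinf : Linf = G 1 + ∫ t in Set.Ioi (1:ℝ), D t := tendsto_nhds_unique htop h2
  -- behavior at zero
  have h3 : Tendsto G (nhdsWithin 0 (Set.Ioi 0))
      (nhds (G 1 - ∫ t in Set.Ioc (0:ℝ) 1, D t)) := by
    have h3' : Tendsto (fun a => (G 1 - ∫ t in Set.Ioc (0:ℝ) 1, D t)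
        + ∫ t in Set.Ioc (0:ℝ) a, D t) (nhdsWithin 0 (Set.Ioi 0))
        (nhds ((G 1 - ∫ t in Set.Ioc (0:ℝ) 1, D t) + 0)) :=
      tendsto_const_nhds.add (tendstoPrimZero hDi)
    rw [add_zero] at h3'
    apply h3'.congr'
    filter_upwards [Ioo_mem_nhdsGT_of_mem (Set.mem_Ico.mpr ⟨le_refl (0:ℝ), zero_lt_one⟩)]
      with a ha
    have ha0 : 0 < a := ha.1
    have ha1 : a ≤ 1 := ha.2.le
    have hftc : G 1 - G a = ∫ t in a..1, D t := ftcIoi hG hDc ha0 ha1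
    rw [intervalIntegral.integral_of_le ha1] at hftc
    have hsplit : (∫ t in Set.Ioc (0:ℝ) 1, D t)
        = (∫ t in Set.Ioc (0:ℝ) a, D t) + ∫ t in Set.Ioc a 1, D t := by
      rw [← setIntegral_union (Set.Ioc_disjoint_Ioc.mpr (le_trans inf_le_left le_sup_right)) measurableSet_Ioc
        (hDi.mono_set Set.Ioc_subset_Ioi_self)
        ((hDi.mono_set Set.Ioc_subset_Ioi_self).mono_set (Set.Ioc_subset_Ioc_left ha0.le)),
        Set.Ioc_union_Ioc_eq_Ioc ha0.le ha1]
    show (G 1 - ∫ t in Set.Ioc (0:ℝ) 1, D t) + (∫ t in Set.Ioc (0:ℝ) a, D t) = G a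
    linarith
  have : G 1 - ∫ t in Set.Ioc (0:ℝ) 1, D t = Linf - ∫ t in Set.Ioi (0:ℝ), D t := by
    rw [hLinf, splitIoi hDi]; ring
  rwa [this] at h3

lemma intPos {f : ℝ → ℝ} (hf : IntegrableOn f (Set.Ioi 0)) (hpos : ∀ t ∈ Set.Ioi (0:ℝ), 0 < f t) :
    0 < ∫ t in Set.Ioi (0:ℝ), f t := by
  rw [setIntegral_pos_iff_support_of_nonneg_ae _ hf]
  · have hsub : Set.Ioi (0:ℝ) ⊆ Function.support f ∩ Set.Ioi 0 :=
      fun t ht => ⟨ne_of_gt (hpos t ht), ht⟩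
    calc (0:ENNReal) < volume (Set.Ioi (0:ℝ)) := by simp [Real.volume_Ioi]
      _ ≤ volume (Function.support f ∩ Set.Ioi 0) := measure_mono hsub
  · filter_upwards [ae_restrict_mem measurableSet_Ioi] with t ht using (hpos t ht).le

lemma limitZeroEq {w w' : ℝ → ℝ} (hw : ∀ r ∈ Set.Ioi (0:ℝ), HasDerivAt w (w' r) r)
    (hc : ContinuousOn w' (Set.Ioi 0)) {N C ε L : ℝ} (hε : 0 < ε)
    (hC : ∀ r ∈ Set.Ioo (0:ℝ) ε, |w r - N * Real.log r| ≤ C)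
    (hlim : Tendsto (fun r => r * w' r) (nhdsWithin 0 (Set.Ioi 0)) (nhds L)) : L = N := by
  refine le_antisymm (limitZeroLe hw hc hε hC hlim) ?_
  have h2 : -L ≤ -N := by
    apply limitZeroLe (w := fun r => -w r) (w' := fun r => -w' r)
      (fun r hr => (hw r hr).neg) hc.neg hε (N := -N) (C := C) ?_ ?_
    · intro r hr
      have h := hC r hr
      rw [show -w r - -N * Real.log r = -(w r - N * Real.log r) by ring, abs_neg]
      exact h
    · apply hlim.neg.congr
      intro r; ring
  linarith

lemma regOn (u : ℝ → ℝ) (hu : ContDiffOn ℝ 2 u (Set.Ioi 0)) :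
    (∀ r ∈ Set.Ioi (0:ℝ), HasDerivAt u (deriv u r) r) ∧
      ContinuousOn (deriv u) (Set.Ioi 0) ∧
      (∀ r ∈ Set.Ioi (0:ℝ), DifferentiableAt ℝ (deriv u) r) := by
  have hu11 : ContDiffOn ℝ (1 + 1) u (Set.Ioi 0) := by
    convert hu using 2
    exact one_add_one_eq_two
  obtain ⟨hud, -, hu1⟩ := (contDiffOn_succ_iff_deriv_of_isOpen isOpen_Ioi).mp hu11
  refine ⟨fun r hr => (hud.differentiableAt (isOpen_Ioi.mem_nhds hr)).hasDerivAt,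
    hu1.continuousOn, fun r hr =>
    (hu1.differentiableOn one_ne_zero).differentiableAt (isOpen_Ioi.mem_nhds hr)⟩

set_option maxHeartbeats 2000000 in
theorem stmt14 (N₁ N₂ : ℕ) (β₁ β₂ : ℝ) (hβ₁ : 0 < β₁) (hβ₂ : 0 < β₂) (u v : ℝ → ℝ)
    (hu : ContDiffOn ℝ 2 u (Set.Ioi 0)) (hv : ContDiffOn ℝ 2 v (Set.Ioi 0))
    (hODEu : ∀ r > (0 : ℝ),
      deriv (fun s => s * deriv u s) r = -(r * Real.exp (v r) * (Real.exp (u r) + 1)))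
    (hODEv : ∀ r > (0 : ℝ),
      deriv (fun s => s * deriv v s) r = -(r * Real.exp (u r) * (Real.exp (v r) - 1)))
    (hu0 : ∃ C ε, 0 < ε ∧ ∀ r ∈ Set.Ioo (0 : ℝ) ε, |u r - 2 * N₁ * Real.log r| ≤ C)
    (hv0 : ∃ C ε, 0 < ε ∧ ∀ r ∈ Set.Ioo (0 : ℝ) ε, |v r - 2 * N₂ * Real.log r| ≤ C)
    (hintu : IntegrableOn (fun t => t * Real.exp (u t)) (Set.Ioi 0))
    (hintv : IntegrableOn (fun t => t * Real.exp (v t)) (Set.Ioi 0))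
    (hintuv : IntegrableOn (fun t => t * Real.exp (u t + v t)) (Set.Ioi 0))
    (hlimu : Tendsto (fun r => r * deriv u r) atTop (nhds (-2 * β₁)))
    (hlimv : Tendsto (fun r => r * deriv v r) atTop (nhds (-2 * β₂)))
    (hdecay : Tendsto
      (fun r => r ^ 2 * (Real.exp (u r + v r) + Real.exp (v r) + Real.exp (u r)))
      atTop (nhds 0)) :
    0 < (β₁ - 1) * (β₂ - 1) ∧ (β₁ - 1) * (β₂ - 1) < (N₁ + 1) * (N₂ + 1) ∧
    β₂ * (β₁ - 1) > N₂ * (N₁ + 1) ∧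
    0 < β₁ * (β₂ - 1) ∧ β₁ * (β₂ - 1) < N₁ * (N₂ + 1) := by
  -- regularity
  obtain ⟨huAt, hcu', hDu⟩ := regOn u hu
  obtain ⟨hvAt, hcv', hDv⟩ := regOn v hv
  have hcu : ContinuousOn u (Set.Ioi 0) := hu.continuousOn
  have hcv : ContinuousOn v (Set.Ioi 0) := hv.continuousOn
  have hcteuv : ContinuousOn (fun t : ℝ => t * Real.exp (u t + v t)) (Set.Ioi 0) :=
    (continuous_id.continuousOn).mul (Real.continuous_exp.comp_continuousOn (hcu.add hcv))
  have hctev : ContinuousOn (fun t : ℝ => t * Real.exp (v t)) (Set.Ioi 0) :=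
    (continuous_id.continuousOn).mul (Real.continuous_exp.comp_continuousOn hcv)
  have hcteu : ContinuousOn (fun t : ℝ => t * Real.exp (u t)) (Set.Ioi 0) :=
    (continuous_id.continuousOn).mul (Real.continuous_exp.comp_continuousOn hcu)
  have hcD₁ : ContinuousOn (fun t : ℝ => -(t * Real.exp (u t + v t) + t * Real.exp (v t)))
      (Set.Ioi 0) := (hcteuv.add hctev).neg
  have hcD₂ : ContinuousOn (fun t : ℝ => -(t * Real.exp (u t + v t) - t * Real.exp (u t)))
      (Set.Ioi 0) := (hcteuv.sub hcteu).neg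
  have hiD₁ : IntegrableOn (fun t : ℝ => -(t * Real.exp (u t + v t) + t * Real.exp (v t)))
      (Set.Ioi 0) := (hintuv.add hintv).neg
  have hiD₂ : IntegrableOn (fun t : ℝ => -(t * Real.exp (u t + v t) - t * Real.exp (u t)))
      (Set.Ioi 0) := (hintuv.sub hintu).neg
  -- derivative facts
  have hPd : ∀ r ∈ Set.Ioi (0:ℝ), HasDerivAt (fun s => s * deriv u s)
      (-(r * Real.exp (u r + v r) + r * Real.exp (v r))) r := by
    intro r hr
    have h1 : DifferentiableAt ℝ (fun s => s * deriv u s) r :=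
      differentiableAt_fun_id.mul (hDu r hr)
    have h2 := h1.hasDerivAt
    rw [hODEu r hr] at h2
    refine h2.congr_deriv ?_
    rw [Real.exp_add]; ring
  have hQd : ∀ r ∈ Set.Ioi (0:ℝ), HasDerivAt (fun s => s * deriv v s)
      (-(r * Real.exp (u r + v r) - r * Real.exp (u r))) r := by
    intro r hr
    have h1 : DifferentiableAt ℝ (fun s => s * deriv v s) r :=
      differentiableAt_fun_id.mul (hDv r hr)
    have h2 := h1.hasDerivAt
    rw [hODEv r hr] at h2
    refine h2.congr_deriv ?_
    rw [Real.exp_add]; ring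
  -- flux limits at 0 and the first two identities
  obtain ⟨Cu, εu, hεu, hCu⟩ := hu0
  obtain ⟨Cv, εv, hεv, hCv⟩ := hv0
  have hPzero := flux hPd hcD₁ hiD₁ hlimu
  have hQzero := flux hQd hcD₂ hiD₂ hlimv
  have hID₁ : (∫ t in Set.Ioi (0:ℝ), -(t * Real.exp (u t + v t) + t * Real.exp (v t)))
      = -((∫ t in Set.Ioi (0:ℝ), t * Real.exp (u t + v t))
        + ∫ t in Set.Ioi (0:ℝ), t * Real.exp (v t)) := by
    rw [integral_neg, integral_add hintuv hintv]
  have hID₂ : (∫ t in Set.Ioi (0:ℝ), -(t * Real.exp (u t + v t) - t * Real.exp (u t)))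
      = -((∫ t in Set.Ioi (0:ℝ), t * Real.exp (u t + v t))
        - ∫ t in Set.Ioi (0:ℝ), t * Real.exp (u t)) := by
    rw [integral_neg, integral_sub hintuv hintu]
  have hPzero' : Tendsto (fun s => s * deriv u s) (nhdsWithin 0 (Set.Ioi 0))
      (nhds (-2 * β₁ - -((∫ t in Set.Ioi (0:ℝ), t * Real.exp (u t + v t))
        + ∫ t in Set.Ioi (0:ℝ), t * Real.exp (v t)))) := by
    rw [← hID₁]; exact hPzero
  have hQzero' : Tendsto (fun s => s * deriv v s) (nhdsWithin 0 (Set.Ioi 0))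
      (nhds (-2 * β₂ - -((∫ t in Set.Ioi (0:ℝ), t * Real.exp (u t + v t))
        - ∫ t in Set.Ioi (0:ℝ), t * Real.exp (u t)))) := by
    rw [← hID₂]; exact hQzero
  have hE1 := limitZeroEq huAt hcu' hεu hCu hPzero'
  have hE2 := limitZeroEq hvAt hcv' hεv hCv hQzero'
  have eqA : (∫ t in Set.Ioi (0:ℝ), t * Real.exp (u t + v t))
      + (∫ t in Set.Ioi (0:ℝ), t * Real.exp (v t)) = 2*β₁ + 2*(N₁:ℝ) := by linarith
  have eqB : (∫ t in Set.Ioi (0:ℝ), t * Real.exp (u t + v t))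
      - (∫ t in Set.Ioi (0:ℝ), t * Real.exp (u t)) = 2*β₂ + 2*(N₂:ℝ) := by linarith
  -- lower bound for r u'
  have hPlow : ∀ r, 0 < r → -(2*β₁) ≤ r * deriv u r := by
    intro r hr
    have hev : ∀ᶠ R in atTop, R * deriv u R ≤ r * deriv u r := by
      filter_upwards [eventually_ge_atTop r] with R hR
      have hftc : R * deriv u R - r * deriv u r
          = ∫ t in r..R, -(t * Real.exp (u t + v t) + t * Real.exp (v t)) :=
        ftcIoi hPd hcD₁ hr hR
      rw [intervalIntegral.integral_neg] at hftc
      have hnn : 0 ≤ ∫ t in r..R, (t * Real.exp (u t + v t) + t * Real.exp (v t)) := by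
        apply intervalIntegral.integral_nonneg hR
        intro t ht
        have ht0 : 0 < t := lt_of_lt_of_le hr ht.1
        positivity
      linarith
    have := le_of_tendsto hlimu hev
    linarith
  -- β₁ > 1
  have hβ₁1 : 1 < β₁ := by
    have hψK : ∀ R, (1:ℝ) ≤ R → (∫ t in (1:ℝ)..R, (0:ℝ)) ≤ 0 := by intro R hR; simp
    have hlb : ∀ r, (1:ℝ) ≤ r → -(2*β₁)/r - 0 ≤ deriv u r := by
      intro r hr
      have hr0 : (0:ℝ) < r := lt_of_lt_of_le one_pos hr
      have h := hPlow r hr0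
      rw [sub_zero, div_le_iff₀ hr0]
      linarith [mul_comm r (deriv u r)]
    have hlow := expLower huAt hcu' le_rfl continuousOn_const hψK hlb
    refine oneLtOfExpLower (Real.exp_pos (u 1)) le_rfl (fun R hR => ?_) hintu
    have h := hlow R hR
    rw [Real.log_one] at h
    simpa using h
  -- eventual upper bound for r u'
  obtain ⟨r₁', hr₁'⟩ := eventually_atTop.mp
    (hlimu.eventually (eventually_lt_nhds (show -2*β₁ < -(β₁+1) by linarith)))
  have hr₁1 : (1:ℝ) ≤ max r₁' 1 := le_max_right _ _
  have hr₁0 : (0:ℝ) < max r₁' 1 := lt_of_lt_of_le one_pos hr₁1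
  have hr₁P : ∀ r, max r₁' 1 ≤ r → r * deriv u r ≤ -(β₁+1) :=
    fun r hr => (hr₁' r (le_trans (le_max_left _ _) hr)).le
  -- upper bound for exp (u R)
  have hupp : ∀ R, max r₁' 1 ≤ R → Real.exp (u R)
      ≤ Real.exp (u (max r₁' 1) + (β₁+1) * Real.log (max r₁' 1)) * R ^ (-(β₁+1)) := by
    have hψK : ∀ R, max r₁' 1 ≤ R → (∫ t in (max r₁' 1)..R, (0:ℝ)) ≤ 0 := by
      intro R hR; simp
    have hlb : ∀ r, max r₁' 1 ≤ r → -(-(β₁+1))/r - 0 ≤ -deriv u r := by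
      intro r hr
      have hr0 : 0 < r := lt_of_lt_of_le hr₁0 hr
      have h := hr₁P r hr
      rw [sub_zero, neg_neg, div_le_iff₀ hr0]
      nlinarith
    have hlow := expLower (w := fun s => -u s) (w' := fun s => -deriv u s)
      (fun r hr => (huAt r hr).neg) hcu'.neg hr₁1 continuousOn_const hψK hlb
    intro R hR
    have h := hlow R hR
    have hR0 : 0 < R := lt_of_lt_of_le hr₁0 hR
    rw [neg_neg] at h
    have hcst : Real.exp (-u (max r₁' 1) - 0 + -(β₁+1) * Real.log (max r₁' 1))
        = (Real.exp (u (max r₁' 1) + (β₁+1) * Real.log (max r₁' 1)))⁻¹ := by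
      rw [← Real.exp_neg]
      congr 1
      ring
    rw [hcst, Real.exp_neg (u R)] at h
    rw [Real.rpow_neg hR0.le]
    have h1 : 0 < (Real.exp (u (max r₁' 1) + (β₁+1) * Real.log (max r₁' 1)))⁻¹ * R ^ (β₁+1) := by
      positivity
    have h2 := inv_anti₀ h1 h
    rw [inv_inv, mul_inv, inv_inv] at h2
    exact h2
  -- bound on the tail integral of t exp(u t)
  have hJ : ∀ r, max r₁' 1 ≤ r → (∫ t in Set.Ioi r, t * Real.exp (u t))
      ≤ Real.exp (u (max r₁' 1) + (β₁+1) * Real.log (max r₁' 1)) / (β₁-1) * r ^ (1-β₁) := by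
    intro r hr
    have hr0 : 0 < r := lt_of_lt_of_le hr₁0 hr
    have hrint : IntegrableOn
        (fun t : ℝ => Real.exp (u (max r₁' 1) + (β₁+1) * Real.log (max r₁' 1)) * t ^ (-β₁))
        (Set.Ioi r) := (integrableOn_Ioi_rpow_of_lt (by linarith) hr0).const_mul _
    have hmono : (∫ t in Set.Ioi r, t * Real.exp (u t))
        ≤ ∫ t in Set.Ioi r,
            Real.exp (u (max r₁' 1) + (β₁+1) * Real.log (max r₁' 1)) * t ^ (-β₁) := by
      apply setIntegral_mono_on (hintu.mono_set (Set.Ioi_subset_Ioi hr0.le)) hrint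
        measurableSet_Ioi
      intro t ht
      have ht0 : 0 < t := lt_trans hr0 ht
      calc t * Real.exp (u t)
          ≤ t * (Real.exp (u (max r₁' 1) + (β₁+1) * Real.log (max r₁' 1)) * t ^ (-(β₁+1))) :=
            mul_le_mul_of_nonneg_left (hupp t (le_trans hr (le_of_lt ht))) ht0.le
        _ = Real.exp (u (max r₁' 1) + (β₁+1) * Real.log (max r₁' 1)) * t ^ (-β₁) := by
            rw [show -β₁ = 1 + (-(β₁+1)) by ring, Real.rpow_add ht0, Real.rpow_one]; ring
    have hval : (∫ t in Set.Ioi r,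
          Real.exp (u (max r₁' 1) + (β₁+1) * Real.log (max r₁' 1)) * t ^ (-β₁))
        = Real.exp (u (max r₁' 1) + (β₁+1) * Real.log (max r₁' 1)) / (β₁-1) * r ^ (1-β₁) := by
      rw [integral_const_mul, integral_Ioi_rpow_of_lt (by linarith) hr0]
      rw [show -β₁ + 1 = 1-β₁ by ring]
      have h6 : -r ^ (1-β₁) / (1-β₁) = r ^ (1-β₁) / (β₁-1) := by
        rw [div_eq_div_iff (by intro h; exact absurd (by linarith : β₁ = 1) (by intro h2; linarith [hβ₁1])) (by intro h; linarith [hβ₁1] : β₁ - 1 ≠ 0)]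
        ring
      rw [h6]
      ring
    linarith
  -- lower bound for r v'
  have hQlow : ∀ r, 0 < r →
      -(2*β₂) - (∫ t in Set.Ioi r, t * Real.exp (u t)) ≤ r * deriv v r := by
    intro r hr
    have hev : ∀ᶠ R in atTop, R * deriv v R
        ≤ r * deriv v r + ∫ t in Set.Ioi r, t * Real.exp (u t) := by
      filter_upwards [eventually_ge_atTop r] with R hR
      have hsub : Set.uIcc r R ⊆ Set.Ioi (0:ℝ) := by
        rw [Set.uIcc_of_le hR]
        intro x hx; exact lt_of_lt_of_le hr hx.1
      have hftc : R * deriv v R - r * deriv v r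
          = ∫ t in r..R, -(t * Real.exp (u t + v t) - t * Real.exp (u t)) :=
        ftcIoi hQd hcD₂ hr hR
      have hle1 : (∫ t in r..R, -(t * Real.exp (u t + v t) - t * Real.exp (u t)))
          ≤ ∫ t in r..R, t * Real.exp (u t) := by
        apply intervalIntegral.integral_mono_on hR ((hcD₂.mono hsub).intervalIntegrable)
          ((hcteu.mono hsub).intervalIntegrable)
        intro t ht
        have ht0 : 0 < t := lt_of_lt_of_le hr ht.1
        have : 0 ≤ t * Real.exp (u t + v t) := by positivity
        linarith
      have hle2 : (∫ t in r..R, t * Real.exp (u t))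
          ≤ ∫ t in Set.Ioi r, t * Real.exp (u t) := by
        rw [intervalIntegral.integral_of_le hR]
        apply setIntegral_mono_set (hintu.mono_set (Set.Ioi_subset_Ioi hr.le)) ?_
          (HasSubset.Subset.eventuallyLE Set.Ioc_subset_Ioi_self)
        filter_upwards [ae_restrict_mem measurableSet_Ioi] with t ht
        have ht0 : 0 < t := lt_trans hr ht
        positivity
      linarith
    have := le_of_tendsto hlimv hev
    linarith
  -- β₂ > 1
  have hβ₂1 : 1 < β₂ := by
    have hc₂pos : 0 < Real.exp (u (max r₁' 1) + (β₁+1) * Real.log (max r₁' 1)) :=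
      Real.exp_pos _
    have hψcont : ContinuousOn
        (fun t : ℝ => Real.exp (u (max r₁' 1) + (β₁+1) * Real.log (max r₁' 1)) / (β₁-1)
          * t ^ (-β₁)) (Set.Ioi 0) := by
      apply continuousOn_const.mul
      intro t ht
      exact (Real.continuousAt_rpow_const t _ (Or.inl (ne_of_gt ht))).continuousWithinAt
    have hψint : IntegrableOn
        (fun t : ℝ => Real.exp (u (max r₁' 1) + (β₁+1) * Real.log (max r₁' 1)) / (β₁-1)
          * t ^ (-β₁)) (Set.Ioi (max r₁' 1)) :=
      (integrableOn_Ioi_rpow_of_lt (by linarith) hr₁0).const_mul _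
    have hψK : ∀ R, max r₁' 1 ≤ R →
        (∫ t in (max r₁' 1)..R,
          Real.exp (u (max r₁' 1) + (β₁+1) * Real.log (max r₁' 1)) / (β₁-1) * t ^ (-β₁))
        ≤ ∫ t in Set.Ioi (max r₁' 1),
          Real.exp (u (max r₁' 1) + (β₁+1) * Real.log (max r₁' 1)) / (β₁-1) * t ^ (-β₁) := by
      intro R hR
      rw [intervalIntegral.integral_of_le hR]
      apply setIntegral_mono_set hψint ?_
        (HasSubset.Subset.eventuallyLE Set.Ioc_subset_Ioi_self)
      filter_upwards [ae_restrict_mem measurableSet_Ioi] with t ht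
      have ht0 : 0 < t := lt_trans hr₁0 ht
      exact mul_nonneg (div_nonneg hc₂pos.le (by linarith)) (Real.rpow_nonneg ht0.le _)
    have hlbv : ∀ r, max r₁' 1 ≤ r →
        -(2*β₂)/r - Real.exp (u (max r₁' 1) + (β₁+1) * Real.log (max r₁' 1)) / (β₁-1)
          * r ^ (-β₁) ≤ deriv v r := by
      intro r hr
      have hr0 : 0 < r := lt_of_lt_of_le hr₁0 hr
      have h1 := hQlow r hr0
      have h2 := hJ r hr
      have h3 : r ^ (1-β₁) = r * r ^ (-β₁) := by
        rw [show (1:ℝ)-β₁ = 1 + -β₁ by ring, Real.rpow_add hr0, Real.rpow_one]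
      have h4 : -(2*β₂) - Real.exp (u (max r₁' 1) + (β₁+1) * Real.log (max r₁' 1)) / (β₁-1)
          * (r * r ^ (-β₁)) ≤ r * deriv v r := by
        rw [← h3]; linarith
      have h5 : -(2*β₂)/r - Real.exp (u (max r₁' 1) + (β₁+1) * Real.log (max r₁' 1)) / (β₁-1)
          * r ^ (-β₁)
          = (-(2*β₂) - Real.exp (u (max r₁' 1) + (β₁+1) * Real.log (max r₁' 1)) / (β₁-1)
            * (r * r ^ (-β₁))) / r := by
        field_simp
      rw [h5, div_le_iff₀ hr0]
      nlinarith
    have hlow := expLower hvAt hcv' hr₁1 hψcont hψK hlbv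
    exact oneLtOfExpLower (Real.exp_pos _) hr₁1 hlow hintv
  -- the Pohozaev-type identity
  have hcDF : ContinuousOn (fun t : ℝ => 2*(t * Real.exp (u t + v t)) + 2*(t * Real.exp (v t))
      - 2*(t * Real.exp (u t))) (Set.Ioi 0) :=
    ((continuousOn_const.mul hcteuv).add (continuousOn_const.mul hctev)).sub
      (continuousOn_const.mul hcteu)
  have hiDF : IntegrableOn (fun t : ℝ => 2*(t * Real.exp (u t + v t)) + 2*(t * Real.exp (v t))
      - 2*(t * Real.exp (u t))) (Set.Ioi 0) :=
    ((hintuv.const_mul 2).add (hintv.const_mul 2)).sub (hintu.const_mul 2)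
  have hFd : ∀ r ∈ Set.Ioi (0:ℝ), HasDerivAt
      (fun s => (s * deriv u s) * (s * deriv v s)
        + s^2 * (Real.exp (u s + v s) + Real.exp (v s) - Real.exp (u s)))
      (2*(r * Real.exp (u r + v r)) + 2*(r * Real.exp (v r)) - 2*(r * Real.exp (u r))) r := by
    intro r hr
    have hP := hPd r hr
    have hQ := hQd r hr
    have hEd : HasDerivAt
        (fun s => Real.exp (u s + v s) + Real.exp (v s) - Real.exp (u s))
        (Real.exp (u r + v r) * (deriv u r + deriv v r) + Real.exp (v r) * deriv v r
          - Real.exp (u r) * deriv u r) r :=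
      ((((huAt r hr).add (hvAt r hr)).exp).add ((hvAt r hr).exp)).sub ((huAt r hr).exp)
    have hr2 : HasDerivAt (fun s : ℝ => s^2) (2*r) r := by
      simpa using hasDerivAt_pow 2 r
    have hcomb := (hP.mul hQ).add (hr2.mul hEd)
    refine hcomb.congr_deriv ?_
    simp only [Real.exp_add]
    ring
  have hFtop : Tendsto (fun r => (r * deriv u r) * (r * deriv v r)
      + r^2 * (Real.exp (u r + v r) + Real.exp (v r) - Real.exp (u r))) atTop
      (nhds (4*(β₁*β₂))) := by
    have hT2 : Tendsto
        (fun r => r^2 * (Real.exp (u r + v r) + Real.exp (v r) - Real.exp (u r))) atTop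
        (nhds 0) := by
      apply squeeze_zero_norm ?_ hdecay
      intro r
      have e1 := Real.exp_pos (u r + v r)
      have e2 := Real.exp_pos (v r)
      have e3 := Real.exp_pos (u r)
      rw [Real.norm_eq_abs, abs_mul, abs_of_nonneg (sq_nonneg r)]
      have habs : |Real.exp (u r + v r) + Real.exp (v r) - Real.exp (u r)|
          ≤ Real.exp (u r + v r) + Real.exp (v r) + Real.exp (u r) :=
        abs_le.mpr ⟨by linarith, by linarith⟩
      exact mul_le_mul_of_nonneg_left habs (sq_nonneg r)
    have := (hlimu.mul hlimv).add hT2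
    rw [show (-2*β₁) * (-2*β₂) + 0 = 4*(β₁*β₂) by ring] at this
    exact this
  have hFflux := flux hFd hcDF hiDF hFtop
  -- limit of F at 0 computed directly
  have hP0 : Tendsto (fun r => r * deriv u r) (nhdsWithin 0 (Set.Ioi 0))
      (nhds (2*(N₁:ℝ))) := by
    rw [show (2*(N₁:ℝ)) = -2*β₁ - -((∫ t in Set.Ioi (0:ℝ), t * Real.exp (u t + v t))
      + ∫ t in Set.Ioi (0:ℝ), t * Real.exp (v t)) by linarith]
    exact hPzero'
  have hQ0 : Tendsto (fun r => r * deriv v r) (nhdsWithin 0 (Set.Ioi 0))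
      (nhds (2*(N₂:ℝ))) := by
    rw [show (2*(N₂:ℝ)) = -2*β₂ - -((∫ t in Set.Ioi (0:ℝ), t * Real.exp (u t + v t))
      - ∫ t in Set.Ioi (0:ℝ), t * Real.exp (u t)) by linarith]
    exact hQzero'
  have hT20 : Tendsto
      (fun r => r^2 * (Real.exp (u r + v r) + Real.exp (v r) - Real.exp (u r)))
      (nhdsWithin 0 (Set.Ioi 0)) (nhds 0) := by
    have hg : Tendsto (fun r : ℝ => r^2 * (Real.exp (Cu + Cv) + Real.exp Cv + Real.exp Cu))
        (nhdsWithin 0 (Set.Ioi 0)) (nhds 0) := by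
      have hco : Continuous (fun r : ℝ => r^2 * (Real.exp (Cu + Cv) + Real.exp Cv + Real.exp Cu)) :=
        (continuous_pow 2).mul continuous_const
      have h0 := hco.tendsto 0
      norm_num at h0
      exact h0.mono_left nhdsWithin_le_nhds
    apply squeeze_zero_norm' ?_ hg
    have hεm : (0:ℝ) < min (min εu εv) 1 := by positivity
    filter_upwards [Ioo_mem_nhdsGT_of_mem (Set.mem_Ico.mpr ⟨le_refl (0:ℝ), hεm⟩)] with r hr
    obtain ⟨hr0, hrlt⟩ := hr
    have hru : r < εu := lt_of_lt_of_le hrlt (le_trans (min_le_left _ _) (min_le_left _ _))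
    have hrv : r < εv := lt_of_lt_of_le hrlt (le_trans (min_le_left _ _) (min_le_right _ _))
    have hr1 : r < 1 := lt_of_lt_of_le hrlt (min_le_right _ _)
    have hlog : Real.log r ≤ 0 := Real.log_nonpos hr0.le hr1.le
    have hnn1 : (0:ℝ) ≤ 2*(N₁:ℝ) := by positivity
    have hnn2 : (0:ℝ) ≤ 2*(N₂:ℝ) := by positivity
    have hur : u r ≤ Cu := by
      have h := (abs_le.mp (hCu r ⟨hr0, hru⟩)).2
      nlinarith
    have hvr : v r ≤ Cv := by
      have h := (abs_le.mp (hCv r ⟨hr0, hrv⟩)).2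
      nlinarith
    have e1 : Real.exp (u r + v r) ≤ Real.exp (Cu + Cv) := Real.exp_le_exp.mpr (by linarith)
    have e2 : Real.exp (v r) ≤ Real.exp Cv := Real.exp_le_exp.mpr hvr
    have e3 : Real.exp (u r) ≤ Real.exp Cu := Real.exp_le_exp.mpr hur
    have p1 := Real.exp_pos (u r + v r)
    have p2 := Real.exp_pos (v r)
    have p3 := Real.exp_pos (u r)
    rw [Real.norm_eq_abs, abs_mul, abs_of_nonneg (sq_nonneg r)]
    have habs : |Real.exp (u r + v r) + Real.exp (v r) - Real.exp (u r)|
        ≤ Real.exp (Cu + Cv) + Real.exp Cv + Real.exp Cu :=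
      abs_le.mpr ⟨by linarith, by linarith⟩
    exact mul_le_mul_of_nonneg_left habs (sq_nonneg r)
  have hFzero : Tendsto (fun r => (r * deriv u r) * (r * deriv v r)
      + r^2 * (Real.exp (u r + v r) + Real.exp (v r) - Real.exp (u r)))
      (nhdsWithin 0 (Set.Ioi 0)) (nhds (2*(N₁:ℝ) * (2*(N₂:ℝ)) + 0)) :=
    (hP0.mul hQ0).add hT20
  have hE3 := tendsto_nhds_unique hFflux hFzero
  have hIDF : (∫ t in Set.Ioi (0:ℝ), (2*(t * Real.exp (u t + v t)) + 2*(t * Real.exp (v t))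
      - 2*(t * Real.exp (u t)))) = 2*(∫ t in Set.Ioi (0:ℝ), t * Real.exp (u t + v t))
      + 2*(∫ t in Set.Ioi (0:ℝ), t * Real.exp (v t))
      - 2*(∫ t in Set.Ioi (0:ℝ), t * Real.exp (u t)) := by
    have h1 : IntegrableOn (fun t : ℝ => 2*(t * Real.exp (u t + v t)) + 2*(t * Real.exp (v t)))
        (Set.Ioi 0) := (hintuv.const_mul 2).add (hintv.const_mul 2)
    have h2 : IntegrableOn (fun t : ℝ => 2*(t * Real.exp (u t))) (Set.Ioi 0) :=
      hintu.const_mul 2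
    have h3 : IntegrableOn (fun t : ℝ => 2*(t * Real.exp (u t + v t))) (Set.Ioi 0) :=
      hintuv.const_mul 2
    have h4 : IntegrableOn (fun t : ℝ => 2*(t * Real.exp (v t))) (Set.Ioi 0) :=
      hintv.const_mul 2
    rw [integral_sub h1 h2, integral_add h3 h4,
      integral_const_mul, integral_const_mul, integral_const_mul]
  rw [hIDF] at hE3
  -- positivity of the three integrals
  have hApos : 0 < ∫ t in Set.Ioi (0:ℝ), t * Real.exp (u t + v t) :=
    intPos hintuv (fun t ht => mul_pos ht (Real.exp_pos _))
  have hBpos : 0 < ∫ t in Set.Ioi (0:ℝ), t * Real.exp (u t) :=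
    intPos hintu (fun t ht => mul_pos ht (Real.exp_pos _))
  have hCpos : 0 < ∫ t in Set.Ioi (0:ℝ), t * Real.exp (v t) :=
    intPos hintv (fun t ht => mul_pos ht (Real.exp_pos _))
  -- conclusion
  refine ⟨?_, ?_, ?_, ?_, ?_⟩
  · nlinarith [mul_pos (sub_pos.mpr hβ₁1) (sub_pos.mpr hβ₂1)]
  · nlinarith [eqA, eqB, hE3, hApos]
  · nlinarith [eqB, hE3, hCpos]
  · nlinarith [mul_pos (lt_trans one_pos hβ₁1) (sub_pos.mpr hβ₂1)]
  · nlinarith [eqA, hE3, hBpos]
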